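/- Let Z = [Z_1, Z_2, ..., Z_H] be a T × (Hd) real matrix formed by horizontally concatenating blocks Z_h ∈ R^{T×d}, where every row of every block Z_h sums to the same constant C. Then rank(Z) ≤ H(d−1) + 1. -/

import Mathlib

theorem rank_concat_constant_row_sum_blocks
    (T H d : ℕ) (hT : 1 ≤ T) (hH : 1 ≤ H) (hd : 1 ≤ d) (C : ℝ)
    (Z : Fin H → Matrix (Fin T) (Fin d) ℝ)
    (hsum : ∀ h t, ∑ j, Z h t j = C) :
    (Matrix.of fun (t : Fin T) (p : Fin H × Fin d) => Z p.1 t p.2).rank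
      ≤ H * (d - 1) + 1 := by
  obtain ⟨k, rfl⟩ := Nat.exists_eq_succ_of_ne_zero (by omega : d ≠ 0)
  let A : Matrix (Fin T) ((Fin H × Fin k) ⊕ Unit) ℝ :=
    fun t i => Sum.elim (fun q => Z q.1 t q.2.castSucc) (fun _ => 1) i
  let B : Matrix ((Fin H × Fin k) ⊕ Unit) (Fin H × Fin (k + 1)) ℝ :=
    fun i p => Sum.elim
      (fun q : Fin H × Fin k =>
        if q.1 = p.1 then
          (if p.2 = Fin.last k then -1 else if p.2 = q.2.castSucc then 1 else 0)
        else 0)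
      (fun _ => if p.2 = Fin.last k then C else 0) i
  have hZ : (Matrix.of fun (t : Fin T) (p : Fin H × Fin (k+1)) => Z p.1 t p.2) = A * B := by
    ext t p
    obtain ⟨h, j⟩ := p
    rw [Matrix.mul_apply]
    simp only [Matrix.of_apply, Matrix.mul_apply, A, B, Fintype.sum_sum_type,
      Fintype.sum_prod_type, Finset.univ_unique, Finset.sum_singleton, Sum.elim_inl,
      Sum.elim_inr, one_mul]
    by_cases hj : j = Fin.last k
    · subst hj
      simp only [if_pos rfl, mul_neg, mul_one]
      rw [Finset.sum_eq_single h]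
      · have hs := hsum h t
        rw [Fin.sum_univ_castSucc] at hs
        simp only [if_pos rfl, if_true, mul_neg, mul_one]
        rw [Finset.sum_neg_distrib]
        linarith
      · intro b _ hb
        simp only [if_neg hb, mul_zero, Finset.sum_const_zero]
      · simp
    · obtain ⟨i, rfl⟩ := (Fin.exists_castSucc_eq).2 hj
      simp only [if_neg hj]
      rw [Finset.sum_eq_single h]
      · simp only [if_pos rfl]
        rw [Finset.sum_eq_single i]
        · simp
        · intro b _ hb
          simp [((Fin.castSucc_injective k).ne (Ne.symm hb))]
        · simp
      · intro b _ hb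
        simp only [if_neg hb, mul_zero, Finset.sum_const_zero]
      · simp
  rw [hZ]
  calc (A * B).rank ≤ B.rank := Matrix.rank_mul_le_right A B
    _ ≤ Fintype.card ((Fin H × Fin k) ⊕ Unit) := Matrix.rank_le_card_height B
    _ = H * (k + 1 - 1) + 1 := by simp [mul_comm]
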